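/- Let A be a diagonal n×n matrix with diagonal entries in (0,1) and let C₁, C₂ ⊆ B[0,1] be compact sets such that: (i) there exist bounded gaps G¹ of C₁ and G² of C₂ such that closure(G¹) is not contained in any gap of C₂, closure(G²) is not contained in any gap of C₁, ∂G¹ ⊄ E² (the unbounded gap of C₂) and ∂G² ⊄ E¹ (the unbounded gap of C₁); and (ii) for every pair of bounded gaps G¹ of C₁ and G² of C₂, if ∂G¹ ⊆ G² then G¹ ⊆ G², and if ∂G² ⊆ G¹ then G² ⊆ G¹. Then C₁ and C₂ are a strongly refinable pair for A. -/

import Mathlib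

open Metric Set Topology Filter
open scoped ENNReal Classical

noncomputable section

/-- The affine box `A^s(B[0,1]) + z`, where `A` is the diagonal matrix with
diagonal entries `β j`, so `A^s(B[0,1]) + z = {x : |x j - z j| ≤ (β j)^s for all j}`. -/
def affBox {n : ℕ} (β : Fin n → ℝ) (s : ℝ) (z : Fin n → ℝ) : Set (Fin n → ℝ) :=
  {x | ∀ j, |x j - z j| ≤ (β j) ^ s}

/-- The size `S_A(F)` of `F` with respect to the diagonal matrix with entries `β`. -/
def sizeWrt {n : ℕ} (β : Fin n → ℝ) (F : Set (Fin n → ℝ)) : ℝ :=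
  sInf {t | 0 < t ∧ ∃ z, F ⊆ affBox β (1 / t) z}

/-- `G` is a gap (a connected component of the complement) of `C`. -/
def IsGap {n : ℕ} (C G : Set (Fin n → ℝ)) : Prop :=
  ∃ x ∈ Cᶜ, G = connectedComponentIn Cᶜ x

/-- `G` is a bounded gap of `C`. -/
def IsBoundedGap {n : ℕ} (C G : Set (Fin n → ℝ)) : Prop :=
  IsGap C G ∧ Bornology.IsBounded G

/-- The unbounded gap `E` of `C`: the union of the unbounded connected
components of the complement of `C`. -/
def unboundedGap {n : ℕ} (C : Set (Fin n → ℝ)) : Set (Fin n → ℝ) :=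
  {x | x ∈ Cᶜ ∧ ¬ Bornology.IsBounded (connectedComponentIn Cᶜ x)}

/-- An enumeration `(G_k)_{k ∈ J}` of the bounded gaps of `C`, in non-increasing
order of size with respect to `β`. -/
structure GapEnum {n : ℕ} (β : Fin n → ℝ) (C : Set (Fin n → ℝ)) where
  J : Set ℕ
  G : ℕ → Set (Fin n → ℝ)
  downward : ∀ k l : ℕ, k ≤ l → l ∈ J → k ∈ J
  isGap : ∀ k ∈ J, IsBoundedGap C (G k)
  inj : ∀ k ∈ J, ∀ l ∈ J, G k = G l → k = l
  surj : ∀ G', IsBoundedGap C G' → ∃ k ∈ J, G k = G'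
  anti : ∀ k ∈ J, ∀ l ∈ J, k ≤ l → sizeWrt β (G l) ≤ sizeWrt β (G k)

/-- The gap distance `GD_A(m, C)` with respect to the enumeration `e`. -/
def gapDist {n : ℕ} (β : Fin n → ℝ) (C : Set (Fin n → ℝ)) (e : GapEnum β C) (m : ℕ) : ℝ :=
  sInf {t | 0 < t ∧ ∃ z, (affBox β (1 / t) z ∩ e.G m).Nonempty ∧
    (affBox β (1 / t) z ∩ ((⋃ i ∈ e.J ∩ Iio m, e.G i) ∪ unboundedGap C)).Nonempty}

/-- Extended-real-valued inverse, with `0⁻¹ = ∞`. -/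
def invE (s : ℝ) : EReal := if s = 0 then ⊤ else ((s⁻¹ : ℝ) : EReal)

/-- Affine thickness `τ_A(C)` of `C` with respect to the diagonal matrix with entries `β`,
computed from the enumeration `e` of the bounded gaps of `C`. -/
def thicknessA {n : ℕ} (β : Fin n → ℝ) (C : Set (Fin n → ℝ)) (e : GapEnum β C) : EReal :=
  if e.J = ∅ then (if (interior C).Nonempty then ⊤ else ⊥)
  else if ∃ k ∈ e.J, gapDist β C e k = 0 then ⊥
  else ⨅ k ∈ e.J, (invE (sizeWrt β (e.G k)) - invE (gapDist β C e k))

/-- Open sets `U`, `V` are linked. -/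
def Linked {n : ℕ} (U V : Set (Fin n → ℝ)) : Prop :=
  (U ∩ V).Nonempty ∧ (frontier U \ V).Nonempty ∧ (frontier V \ U).Nonempty

/-- Compact sets `C₁`, `C₂` are BG linked. -/
def BGLinked {n : ℕ} (C₁ C₂ : Set (Fin n → ℝ)) : Prop :=
  ∀ G₁ G₂, IsBoundedGap C₁ G₁ → IsBoundedGap C₂ G₂ → Linked G₁ G₂ ∨ G₁ ∩ G₂ = ∅

/-- `C₁, C₂ ⊆ B[0,1]` are a strongly refinable pair for the diagonal matrix with entries `β`. -/
def StronglyRefinable {n : ℕ} (β : Fin n → ℝ) (C₁ C₂ : Set (Fin n → ℝ)) : Prop :=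
  ∃ C₁' C₂' : Set (Fin n → ℝ), IsCompact C₁' ∧ IsCompact C₂' ∧
    C₁' ⊆ closedBall 0 1 ∧ C₂' ⊆ closedBall 0 1 ∧
    BGLinked C₁' C₂' ∧
    (∃ G₁, IsBoundedGap C₁' G₁ ∧ ¬ frontier G₁ ⊆ unboundedGap C₂') ∧
    (∃ G₂, IsBoundedGap C₂' G₂ ∧ ¬ frontier G₂ ⊆ unboundedGap C₁') ∧
    (∀ e₁ : GapEnum β C₁, ∀ e₂ : GapEnum β C₂, ∃ e₁' : GapEnum β C₁', ∃ e₂' : GapEnum β C₂',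
      thicknessA β C₁ e₁ + thicknessA β C₂ e₂ ≤ thicknessA β C₁' e₁' + thicknessA β C₂' e₂') ∧
    C₁' ∩ C₂' ⊆ C₁ ∩ C₂

/-- The distance between two sets. -/
def setDist {n : ℕ} (A B : Set (Fin n → ℝ)) : ℝ :=
  sInf {r | ∃ a ∈ A, ∃ b ∈ B, r = dist a b}

/-- An enumeration of the bounded gaps of `C` in non-increasing order of diameter. -/
structure DiamEnum {n : ℕ} (C : Set (Fin n → ℝ)) where
  J : Set ℕ
  G : ℕ → Set (Fin n → ℝ)
  downward : ∀ k l : ℕ, k ≤ l → l ∈ J → k ∈ J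
  isGap : ∀ k ∈ J, IsBoundedGap C (G k)
  inj : ∀ k ∈ J, ∀ l ∈ J, G k = G l → k = l
  surj : ∀ G', IsBoundedGap C G' → ∃ k ∈ J, G k = G'
  anti : ∀ k ∈ J, ∀ l ∈ J, k ≤ l → Metric.diam (G l) ≤ Metric.diam (G k)

/-- The Falconer–Yavicoli thickness `τ(C)`, computed from the enumeration `e` of
the bounded gaps of `C` in non-increasing order of diameter. -/
def FYthickness {n : ℕ} (C : Set (Fin n → ℝ)) (e : DiamEnum C) : ℝ≥0∞ :=
  if e.J = ∅ then (if (interior C).Nonempty then ⊤ else 0)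
  else ⨅ k ∈ e.J, ENNReal.ofReal
    (setDist (e.G k) (unboundedGap C ∪ ⋃ j ∈ e.J ∩ Iio k, e.G j) / Metric.diam (e.G k))

end

namespace SRAux

open Bornology

variable {n : ℕ}

/-- Points outside the unit ball lie in unbounded components of the complement. -/
lemma ray_lemma {C : Set (Fin n → ℝ)} (hC : C ⊆ closedBall 0 1)
    {x : Fin n → ℝ} (hx : x ∉ closedBall 0 1) :
    x ∈ Cᶜ ∧ ¬ IsBounded (connectedComponentIn Cᶜ x) := by
  have hxC : x ∈ Cᶜ := fun h => hx (hC h)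
  have hnorm : 1 < ‖x‖ := by
    by_contra h
    exact hx (by simpa [mem_closedBall, dist_zero_right] using not_lt.1 h)
  obtain ⟨j, hj⟩ : ∃ j, 1 < |x j| := by
    by_contra h
    push_neg at h
    exact absurd (pi_norm_le_iff_of_nonneg zero_le_one |>.2
      (fun i => by simpa [Real.norm_eq_abs] using h i)) (not_le.2 hnorm)
  set c : ℝ := if 0 ≤ x j then 1 else -1 with hc
  set f : ℝ → (Fin n → ℝ) := fun t => x + t • (Pi.single j c : Fin n → ℝ) with hf
  have hfj : ∀ t : ℝ, 0 ≤ t → |x j| + t ≤ |f t j| := by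
    intro t ht
    have : f t j = x j + t * c := by simp [hf, Pi.single_eq_same]
    rw [this]
    by_cases h0 : 0 ≤ x j
    · simp only [hc, if_pos h0]
      rw [abs_of_nonneg h0, abs_of_nonneg (by linarith)]
      linarith
    · simp only [hc, if_neg h0]
      push_neg at h0
      rw [abs_of_neg h0, abs_of_neg (by nlinarith)]
      linarith
  have hfC : ∀ t : ℝ, 0 ≤ t → f t ∈ Cᶜ := by
    intro t ht h
    have h1 : ‖f t‖ ≤ 1 := by
      have := hC h
      simpa [mem_closedBall, dist_zero_right] using this
    have h2 : |f t j| ≤ ‖f t‖ := by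
      simpa [Real.norm_eq_abs] using norm_le_pi_norm (f t) j
    have := hfj t ht
    linarith
  have hcont : Continuous f := continuous_const.add (continuous_id.smul continuous_const)
  have hS : f '' (Ici 0) ⊆ connectedComponentIn Cᶜ x := by
    apply IsPreconnected.subset_connectedComponentIn
    · exact isPreconnected_Ici.image f hcont.continuousOn
    · exact ⟨0, self_mem_Ici, by simp [hf]⟩
    · rintro y ⟨t, ht, rfl⟩
      exact hfC t ht
  refine ⟨hxC, fun hb => ?_⟩
  obtain ⟨R, hR⟩ := (hb.subset hS).exists_norm_le
  have h1 := hR (f (|R| + 1)) ⟨|R| + 1, by simp [mem_Ici]; positivity, rfl⟩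
  have h2 := hfj (|R| + 1) (by positivity)
  have h3 : |f (|R|+1) j| ≤ ‖f (|R|+1)‖ := by
    simpa [Real.norm_eq_abs] using norm_le_pi_norm (f (|R|+1)) j
  have h4 : 0 ≤ |x j| := abs_nonneg _
  have h5 : R ≤ |R| := le_abs_self R
  linarith

lemma boundedGap_subset_ball {C G : Set (Fin n → ℝ)} (hC : C ⊆ closedBall 0 1)
    (h : IsBoundedGap C G) : G ⊆ closedBall 0 1 := by
  obtain ⟨⟨x, hx, rfl⟩, hb⟩ := h
  intro g hg
  by_contra hgB
  have h2 := (ray_lemma hC hgB).2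
  have heq : connectedComponentIn Cᶜ x = connectedComponentIn Cᶜ g := connectedComponentIn_eq hg
  rw [← heq] at h2
  exact h2 hb

lemma compl_ball_subset_unboundedGap {C : Set (Fin n → ℝ)} (hC : C ⊆ closedBall 0 1) :
    (closedBall (0 : Fin n → ℝ) 1)ᶜ ⊆ unboundedGap C := fun _ hx =>
  ⟨(ray_lemma hC hx).1, (ray_lemma hC hx).2⟩


/-- Fill in the bounded gaps of `C` whose closure lies in a gap of `D`. -/
def fill (C D : Set (Fin n → ℝ)) : Set (Fin n → ℝ) :=
  C ∪ {x | IsBounded (connectedComponentIn Cᶜ x) ∧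
        ∃ H, IsGap D H ∧ closure (connectedComponentIn Cᶜ x) ⊆ H}

lemma subset_fill {C D : Set (Fin n → ℝ)} : C ⊆ fill C D := subset_union_left

lemma mem_fill_compl {C D : Set (Fin n → ℝ)} {x : Fin n → ℝ} :
    x ∈ (fill C D)ᶜ ↔ x ∈ Cᶜ ∧ ¬ (IsBounded (connectedComponentIn Cᶜ x) ∧
      ∃ H, IsGap D H ∧ closure (connectedComponentIn Cᶜ x) ⊆ H) := by
  rw [fill, Set.compl_union]
  simp only [mem_inter_iff, mem_compl_iff, mem_setOf_eq]

lemma comp_subset_fill_compl {C D : Set (Fin n → ℝ)} {x : Fin n → ℝ}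
    (hx : x ∈ (fill C D)ᶜ) : connectedComponentIn Cᶜ x ⊆ (fill C D)ᶜ := by
  obtain ⟨hx1, hx2⟩ := mem_fill_compl.1 hx
  intro y hy
  rw [mem_fill_compl]
  refine ⟨connectedComponentIn_subset _ _ hy, ?_⟩
  have heq : connectedComponentIn Cᶜ x = connectedComponentIn Cᶜ y := connectedComponentIn_eq hy
  rw [← heq]
  exact hx2

lemma comp_fill_eq {C D : Set (Fin n → ℝ)} (hC : IsClosed C) {x : Fin n → ℝ}
    (hx : x ∈ (fill C D)ᶜ) :
    connectedComponentIn (fill C D)ᶜ x = connectedComponentIn Cᶜ x := by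
  obtain ⟨hx1, _⟩ := mem_fill_compl.1 hx
  apply subset_antisymm
  · exact connectedComponentIn_mono x (compl_subset_compl.2 subset_union_left)
  · exact isPreconnected_connectedComponentIn.subset_connectedComponentIn
      (mem_connectedComponentIn hx1) (comp_subset_fill_compl hx)

lemma isBoundedGap_fill_iff {C D G : Set (Fin n → ℝ)} (hC : IsClosed C) :
    IsBoundedGap (fill C D) G ↔
      (IsBoundedGap C G ∧ ¬ ∃ H, IsGap D H ∧ closure G ⊆ H) := by
  constructor
  · rintro ⟨⟨x, hx, rfl⟩, hbd⟩
    have he := comp_fill_eq (D := D) hC hx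
    obtain ⟨hx1, hx2⟩ := mem_fill_compl.1 hx
    rw [he] at hbd ⊢
    exact ⟨⟨⟨x, hx1, rfl⟩, hbd⟩, fun h => hx2 ⟨hbd, h⟩⟩
  · rintro ⟨⟨⟨x, hx1, rfl⟩, hbd⟩, hne⟩
    have hx : x ∈ (fill C D)ᶜ := mem_fill_compl.2 ⟨hx1, fun h => hne h.2⟩
    exact ⟨⟨x, hx, (comp_fill_eq hC hx).symm⟩, hbd⟩

lemma unboundedGap_fill {C D : Set (Fin n → ℝ)} (hC : IsClosed C) :
    unboundedGap (fill C D) = unboundedGap C := by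
  ext x
  constructor
  · rintro ⟨hx, hb⟩
    exact ⟨(mem_fill_compl.1 hx).1, by rwa [comp_fill_eq hC hx] at hb⟩
  · rintro ⟨hx1, hb⟩
    have hx : x ∈ (fill C D)ᶜ := mem_fill_compl.2 ⟨hx1, fun h => hb h.1⟩
    exact ⟨hx, by rwa [comp_fill_eq hC hx]⟩

lemma isClosed_fill {C D : Set (Fin n → ℝ)} (hC : IsClosed C) : IsClosed (fill C D) := by
  rw [← isOpen_compl_iff, isOpen_iff_forall_mem_open]
  intro x hx
  exact ⟨connectedComponentIn Cᶜ x, comp_subset_fill_compl hx,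
    hC.isOpen_compl.connectedComponentIn,
    mem_connectedComponentIn (mem_fill_compl.1 hx).1⟩

lemma fill_subset_ball {C D : Set (Fin n → ℝ)} (hsub : C ⊆ closedBall 0 1) :
    fill C D ⊆ closedBall 0 1 := by
  rintro x (hx | ⟨hbd, H, hH, hcl⟩)
  · exact hsub hx
  · by_contra h
    exact (ray_lemma hsub h).2 hbd

lemma isCompact_fill {C D : Set (Fin n → ℝ)} (hC : IsClosed C)
    (hsub : C ⊆ closedBall 0 1) : IsCompact (fill C D) :=
  (isCompact_closedBall 0 1).of_isClosed_subset (isClosed_fill hC) (fill_subset_ball hsub)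

lemma fill_inter_subset {C₁ C₂ : Set (Fin n → ℝ)} (hn : 0 < n)
    (hC₁ : IsClosed C₁) (hC₂ : IsClosed C₂) :
    fill C₁ C₂ ∩ fill C₂ C₁ ⊆ C₁ ∩ C₂ := by
  rintro x ⟨h1, h2⟩
  by_cases hx1 : x ∈ C₁
  · refine ⟨hx1, ?_⟩
    by_cases hx2 : x ∈ C₂
    · exact hx2
    · exfalso
      rcases h2 with h2 | ⟨hbd, H, ⟨y, hy, rfl⟩, hcl⟩
      · exact hx2 h2
      · exact (connectedComponentIn_subset _ _
          (hcl (subset_closure (mem_connectedComponentIn hx2)))) hx1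
  · exfalso
    rcases h1 with h1 | ⟨hbd1, H₂, ⟨y₂, hy₂, rfl⟩, hcl1⟩
    · exact hx1 h1
    · by_cases hx2 : x ∈ C₂
      · -- x ∈ C₂ but x ∈ closure (conn C₁ᶜ x) ⊆ H₂ ⊆ C₂ᶜ
        exact (connectedComponentIn_subset _ _
          (hcl1 (subset_closure (mem_connectedComponentIn hx1)))) hx2
      · rcases h2 with h2 | ⟨hbd2, H₁, ⟨y₁, hy₁, rfl⟩, hcl2⟩
        · exact hx2 h2
        · -- both filled: derive clopen bounded nonempty set
          set W₁ := connectedComponentIn C₁ᶜ x with hW₁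
          set W₂ := connectedComponentIn C₂ᶜ x with hW₂
          have hxW₁ : x ∈ W₁ := mem_connectedComponentIn hx1
          have hxW₂ : x ∈ W₂ := mem_connectedComponentIn hx2
          have h12 : closure W₁ ⊆ W₂ := by
            have : x ∈ connectedComponentIn C₂ᶜ y₂ := hcl1 (subset_closure hxW₁)
            have heq : connectedComponentIn C₂ᶜ y₂ = W₂ := connectedComponentIn_eq this
            rw [← heq]; exact hcl1
          have h21 : closure W₂ ⊆ W₁ := by
            have : x ∈ connectedComponentIn C₁ᶜ y₁ := hcl2 (subset_closure hxW₂)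
            have heq : connectedComponentIn C₁ᶜ y₁ = W₁ := connectedComponentIn_eq this
            rw [← heq]; exact hcl2
          have hWeq : W₁ = W₂ :=
            subset_antisymm (subset_closure.trans h12) (subset_closure.trans h21)
          have hclosed : IsClosed W₁ := by
            exact isClosed_of_closure_subset (h12.trans hWeq.symm.subset)
          have hopen : IsOpen W₁ := hC₁.isOpen_compl.connectedComponentIn
          haveI : PreconnectedSpace (Fin n → ℝ) :=
            ⟨(convex_univ : Convex ℝ (univ : Set (Fin n → ℝ))).isPreconnected⟩
          have huniv : W₁ = univ := IsClopen.eq_univ ⟨hclosed, hopen⟩ ⟨x, hxW₁⟩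
          rw [huniv] at hbd1
          obtain ⟨R, hR⟩ := hbd1.exists_norm_le
          set j0 : Fin n := ⟨0, hn⟩
          have hxval : (Pi.single j0 (|R|+1) : Fin n → ℝ) j0 = |R|+1 := Pi.single_eq_same _ _
          have h2 : |R|+1 ≤ ‖(Pi.single j0 (|R|+1) : Fin n → ℝ)‖ := by
            have h3 := norm_le_pi_norm (Pi.single j0 (|R|+1) : Fin n → ℝ) j0
            rw [hxval, Real.norm_eq_abs, abs_of_nonneg (by positivity)] at h3
            exact h3
          have h4 := hR (Pi.single j0 (|R|+1) : Fin n → ℝ) (mem_univ _)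
          have h5 : R ≤ |R| := le_abs_self R
          linarith

lemma invE_antitone {a b : ℝ} (ha : 0 < a) (h : a ≤ b) : invE b ≤ invE a := by
  have hb : 0 < b := ha.trans_le h
  rw [invE, invE, if_neg ha.ne', if_neg hb.ne']
  exact_mod_cast EReal.coe_le_coe_iff.2 (inv_anti₀ ha h)

lemma gapDist_nonneg {β : Fin n → ℝ} {C : Set (Fin n → ℝ)} (e : GapEnum β C) (m : ℕ) :
    0 ≤ gapDist β C e m :=
  Real.sInf_nonneg (fun _ hx => hx.1.le)

/-- For any nonempty `G ⊆ B[0,1]` and any `U ⊇ B[0,1]ᶜ` there is a feasible scale: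
a box meeting both `G` and `U`. -/
lemma exists_feasible (hn : 0 < n) {β : Fin n → ℝ} (hβ : ∀ j, β j ∈ Set.Ioo (0 : ℝ) 1)
    {G U : Set (Fin n → ℝ)} (hGne : G.Nonempty) (hG : G ⊆ closedBall 0 1)
    (hU : (closedBall (0 : Fin n → ℝ) 1)ᶜ ⊆ U) :
    ∃ t, 0 < t ∧ ∃ z, (affBox β (1 / t) z ∩ G).Nonempty ∧ (affBox β (1 / t) z ∩ U).Nonempty := by
  obtain ⟨g, hg⟩ := hGne
  set j0 : Fin n := ⟨0, hn⟩
  set b : ℝ := β j0 with hbdef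
  obtain ⟨hb0, hb1⟩ := hβ j0
  have hlogb : Real.log b < 0 := Real.log_neg hb0 hb1
  set L : ℝ := -Real.log b with hLdef
  have hL : 0 < L := by simp [hLdef]; linarith
  have hlog2 : 0 < Real.log 2 := Real.log_pos one_lt_two
  set a : ℝ := Real.log 2 / (2 * L) with hadef
  have ha : 0 < a := by positivity
  have hr : 1 / 2 < b ^ a := by
    have h1 : b ^ a = Real.exp (a * Real.log b) := by
      rw [Real.rpow_def_of_pos hb0, mul_comm]
    have h2 : a * Real.log b = -(Real.log 2 / 2) := by
      rw [hadef]
      have : Real.log b = -L := by rw [hLdef]; ring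
      rw [this]
      field_simp
    have h3 : (1 : ℝ) / 2 = Real.exp (-Real.log 2) := by
      rw [Real.exp_neg, Real.exp_log (by norm_num : (0:ℝ) < 2)]
      norm_num
    rw [h1, h2, h3]
    apply Real.exp_lt_exp.2
    linarith
  have hrpos : 0 < b ^ a := Real.rpow_pos_of_pos hb0 a
  refine ⟨1 / a, by positivity, ?_⟩
  have hinv : 1 / (1 / a) = a := one_div_one_div a
  rw [hinv]
  set r : ℝ := b ^ a with hrdef
  set c : ℝ := if 0 ≤ g j0 then 1 else -1 with hc
  have habs : |c| = 1 := by
    rw [hc]; split <;> simp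
  set z : Fin n → ℝ := g + r • (Pi.single j0 c : Fin n → ℝ) with hz
  set p : Fin n → ℝ := g + (2 * r) • (Pi.single j0 c : Fin n → ℝ) with hp
  refine ⟨z, ⟨g, ?_, hg⟩, ⟨p, ?_, ?_⟩⟩
  · -- g ∈ affBox β a z
    intro j
    rcases eq_or_ne j j0 with hj | hj
    · have hzj : z j = g j + r * c := by
        rw [hj]; simp [hz, Pi.single_eq_same]
      rw [hzj, show g j - (g j + r * c) = -(r * c) by ring, abs_neg, abs_mul, habs,
          mul_one, abs_of_pos hrpos, hrdef, hbdef, hj]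
    · have hzj : z j = g j := by simp [hz, Pi.single_eq_of_ne hj]
      rw [hzj]
      simpa using (Real.rpow_pos_of_pos (hβ j).1 a).le
  · -- p ∈ affBox β a z
    intro j
    rcases eq_or_ne j j0 with hj | hj
    · have h1 : z j = g j + r * c := by rw [hj]; simp [hz, Pi.single_eq_same]
      have h2 : p j = g j + 2 * r * c := by rw [hj]; simp [hp, Pi.single_eq_same]
      rw [h1, h2, show g j + 2 * r * c - (g j + r * c) = r * c by ring, abs_mul, habs,
          mul_one, abs_of_pos hrpos, hrdef, hbdef, hj]
    · have h1 : z j = g j := by simp [hz, Pi.single_eq_of_ne hj]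
      have h2 : p j = g j := by simp [hp, Pi.single_eq_of_ne hj]
      rw [h1, h2]
      simpa using (Real.rpow_pos_of_pos (hβ j).1 a).le
  · -- p ∈ U
    apply hU
    intro hmem
    have h1 : ‖p‖ ≤ 1 := by simpa [mem_closedBall, dist_zero_right] using hmem
    have h2 : |p j0| ≤ ‖p‖ := by
      simpa [Real.norm_eq_abs] using norm_le_pi_norm p j0
    have h3 : p j0 = g j0 + 2 * r * c := by simp [hp, Pi.single_eq_same]
    have h4 : 1 < |p j0| := by
      rw [h3, hc]
      by_cases h0 : 0 ≤ g j0
      · rw [if_pos h0]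
        have : 0 ≤ g j0 + 2 * r * 1 := by nlinarith
        rw [abs_of_nonneg this]
        nlinarith
      · rw [if_neg h0]
        push_neg at h0
        have : g j0 + 2 * r * (-1) < 0 := by nlinarith
        rw [abs_of_neg this]
        nlinarith
    linarith

lemma thickness_fill (hn : 0 < n) {β : Fin n → ℝ} (hβ : ∀ j, β j ∈ Set.Ioo (0:ℝ) 1)
    {C D : Set (Fin n → ℝ)} (hC : IsCompact C) (hCb : C ⊆ closedBall 0 1)
    (hne : ∃ G₀, IsBoundedGap C G₀ ∧ ¬ ∃ H, IsGap D H ∧ closure G₀ ⊆ H)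
    (e : GapEnum β C) :
    ∃ e' : GapEnum β (fill C D), thicknessA β C e ≤ thicknessA β (fill C D) e' := by
  classical
  have hFc : IsClosed C := hC.isClosed
  set p : ℕ → Prop := fun k => k ∈ e.J ∧ ¬ ∃ H, IsGap D H ∧ closure (e.G k) ⊆ H with hp
  set J' : Set ℕ := {m | ∀ hf : (setOf p).Finite, m < hf.toFinset.card} with hJ'
  have hmem : ∀ m ∈ J', p (Nat.nth p m) := fun m hm => Nat.nth_mem m hm
  have hdown : ∀ k l : ℕ, k ≤ l → l ∈ J' → k ∈ J' :=
    fun k l hkl hl hf => lt_of_le_of_lt hkl (hl hf)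
  have hisgap : ∀ m ∈ J', IsBoundedGap (fill C D) (e.G (Nat.nth p m)) :=
    fun m hm => (isBoundedGap_fill_iff hFc).2 ⟨e.isGap _ (hmem m hm).1, (hmem m hm).2⟩
  have hinj : ∀ k ∈ J', ∀ l ∈ J', e.G (Nat.nth p k) = e.G (Nat.nth p l) → k = l := by
    intro k hk l hl hG
    rcases lt_trichotomy k l with h | h | h
    · exact absurd (e.inj _ (hmem k hk).1 _ (hmem l hl).1 hG) (Nat.nth_lt_nth' h hl).ne
    · exact h
    · exact absurd (e.inj _ (hmem k hk).1 _ (hmem l hl).1 hG) (Nat.nth_lt_nth' h hk).ne'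
  have hsurj : ∀ G', IsBoundedGap (fill C D) G' → ∃ m ∈ J', e.G (Nat.nth p m) = G' := by
    intro G' hG'
    obtain ⟨hCG', hnex⟩ := (isBoundedGap_fill_iff hFc).1 hG'
    obtain ⟨k, hk, hGk⟩ := e.surj G' hCG'
    have hpk : p k := ⟨hk, by rw [hGk]; exact hnex⟩
    obtain ⟨m, hm, hnth⟩ := Nat.exists_lt_card_nth_eq hpk
    exact ⟨m, hm, by rw [hnth, hGk]⟩
  have hanti : ∀ k ∈ J', ∀ l ∈ J', k ≤ l →
      sizeWrt β (e.G (Nat.nth p l)) ≤ sizeWrt β (e.G (Nat.nth p k)) :=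
    fun k hk l hl hkl => e.anti _ (hmem k hk).1 _ (hmem l hl).1 (Nat.nth_le_nth' hkl hl)
  refine ⟨⟨J', fun m => e.G (Nat.nth p m), hdown, hisgap, hinj, hsurj, hanti⟩, ?_⟩
  set e' : GapEnum β (fill C D) :=
    ⟨J', fun m => e.G (Nat.nth p m), hdown, hisgap, hinj, hsurj, hanti⟩ with he'
  obtain ⟨G₀, hG₀, hG₀ne⟩ := hne
  obtain ⟨k₀, hk₀, hGk₀⟩ := e.surj G₀ hG₀
  have hpk₀ : p k₀ := ⟨hk₀, by rw [hGk₀]; exact hG₀ne⟩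
  obtain ⟨m₀, hm₀, hnth₀⟩ := Nat.exists_lt_card_nth_eq hpk₀
  have hJne : e.J ≠ ∅ := Set.nonempty_iff_ne_empty.1 ⟨k₀, hk₀⟩
  have hJ'ne : e'.J ≠ ∅ := Set.nonempty_iff_ne_empty.1 ⟨m₀, hm₀⟩
  have hgd : ∀ m ∈ J', gapDist β C e (Nat.nth p m) ≤ gapDist β (fill C D) e' m := by
    intro m hm
    apply csInf_le_csInf
    · exact ⟨0, fun t ht => ht.1.le⟩
    · -- the feasible set for the filled set is nonempty
      have hgap' : IsBoundedGap (fill C D) (e.G (Nat.nth p m)) := hisgap m hm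
      obtain ⟨⟨x, hx, hXeq⟩, hbdd⟩ := hgap'
      have hGne : (e.G (Nat.nth p m)).Nonempty :=
        ⟨x, hXeq ▸ mem_connectedComponentIn hx⟩
      have hGsub : e.G (Nat.nth p m) ⊆ closedBall 0 1 :=
        boundedGap_subset_ball (fill_subset_ball hCb) (hisgap m hm)
      obtain ⟨t, ht, z, h1, h2⟩ := exists_feasible hn hβ hGne hGsub
        (Set.Subset.trans (compl_ball_subset_unboundedGap (fill_subset_ball hCb))
          subset_union_right)
      exact ⟨t, ht, z, h1, h2⟩
    · rintro t ⟨ht, z, h1, h2⟩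
      refine ⟨ht, z, h1, ?_⟩
      obtain ⟨y, hy1, hy2⟩ := h2
      refine ⟨y, hy1, ?_⟩
      rcases hy2 with hy2 | hy2
      · left
        simp only [mem_iUnion, exists_prop] at hy2 ⊢
        obtain ⟨i, ⟨hiJ, hilt⟩, hyG⟩ := hy2
        exact ⟨Nat.nth p i, ⟨(hmem i hiJ).1, Nat.nth_lt_nth' hilt hm⟩, hyG⟩
      · right
        rwa [unboundedGap_fill hFc] at hy2
  by_cases hz0 : ∃ k ∈ e.J, gapDist β C e k = 0
  · have hbot : thicknessA β C e = ⊥ := by rw [thicknessA, if_neg hJne, if_pos hz0]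
    rw [hbot]; exact bot_le
  · have hpos : ∀ k ∈ e.J, 0 < gapDist β C e k := by
      intro k hk
      rcases lt_or_eq_of_le (gapDist_nonneg e k) with h | h
      · exact h
      · exact absurd ⟨k, hk, h.symm⟩ hz0
    have hz0' : ¬ ∃ m ∈ e'.J, gapDist β (fill C D) e' m = 0 := by
      rintro ⟨m, hm, h0⟩
      have h1 := hgd m hm
      have h2 := hpos _ (hmem m hm).1
      rw [h0] at h1; linarith
    rw [thicknessA, if_neg hJne, if_neg hz0, thicknessA, if_neg hJ'ne, if_neg hz0']
    refine le_iInf₂ fun m hm => ?_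
    refine le_trans (iInf₂_le (Nat.nth p m) (hmem m hm).1) ?_
    exact EReal.sub_le_sub (le_of_eq rfl)
      (invE_antitone (hpos _ (hmem m hm).1) (hgd m hm))

end SRAux

/-- a sufficient condition for strong refinability. -/
theorem sufficient_condition_strongly_refinable (n : ℕ)
    (β : Fin n → ℝ) (hβ : ∀ j, β j ∈ Set.Ioo (0 : ℝ) 1)
    (C₁ C₂ : Set (Fin n → ℝ)) (hC₁ : IsCompact C₁) (hC₂ : IsCompact C₂)
    (hsub₁ : C₁ ⊆ closedBall 0 1) (hsub₂ : C₂ ⊆ closedBall 0 1)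
    (hex : ∃ G₁ G₂ : Set (Fin n → ℝ), IsBoundedGap C₁ G₁ ∧ IsBoundedGap C₂ G₂ ∧
      (¬ ∃ G, IsGap C₂ G ∧ closure G₁ ⊆ G) ∧ (¬ ∃ G, IsGap C₁ G ∧ closure G₂ ⊆ G) ∧
      ¬ frontier G₁ ⊆ unboundedGap C₂ ∧ ¬ frontier G₂ ⊆ unboundedGap C₁)
    (hbdry : ∀ G₁ G₂ : Set (Fin n → ℝ), IsBoundedGap C₁ G₁ → IsBoundedGap C₂ G₂ →
      (frontier G₁ ⊆ G₂ → G₁ ⊆ G₂) ∧ (frontier G₂ ⊆ G₁ → G₂ ⊆ G₁)) :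
    StronglyRefinable β C₁ C₂ := by
  classical
  rcases Nat.eq_zero_or_pos n with hn0 | hn
  · exfalso
    obtain ⟨G₁, G₂, hG₁, hG₂, hnc₁, hnc₂, _, _⟩ := hex
    subst hn0
    have hsing : ∀ x y : Fin 0 → ℝ, x = y := fun x y => funext fun j => j.elim0
    obtain ⟨⟨x₂, hx₂, hG₂eq⟩, _⟩ := hG₂
    obtain ⟨⟨x₁, hx₁, _⟩, _⟩ := hG₁
    apply hnc₂
    refine ⟨connectedComponentIn C₁ᶜ x₂, ⟨x₂, ?_, rfl⟩, ?_⟩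
    · rw [hsing x₂ x₁]; exact hx₁
    · intro y hy
      rw [hsing y x₂]
      exact mem_connectedComponentIn (by rw [hsing x₂ x₁]; exact hx₁)
  · obtain ⟨G₁, G₂, hG₁, hG₂, hnc₁, hnc₂, hf₁, hf₂⟩ := hex
    refine ⟨SRAux.fill C₁ C₂, SRAux.fill C₂ C₁,
      SRAux.isCompact_fill hC₁.isClosed hsub₁, SRAux.isCompact_fill hC₂.isClosed hsub₂,
      SRAux.fill_subset_ball hsub₁, SRAux.fill_subset_ball hsub₂, ?_, ?_, ?_, ?_,
      SRAux.fill_inter_subset hn hC₁.isClosed hC₂.isClosed⟩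
    · -- BG linked
      intro H₁ H₂ h₁ h₂
      by_cases hint : (H₁ ∩ H₂).Nonempty
      · left
        obtain ⟨h₁C, h₁ne⟩ := (SRAux.isBoundedGap_fill_iff hC₁.isClosed).1 h₁
        obtain ⟨h₂C, h₂ne⟩ := (SRAux.isBoundedGap_fill_iff hC₂.isClosed).1 h₂
        refine ⟨hint, ?_, ?_⟩
        · rw [Set.diff_nonempty]
          intro hsub
          have hsub' : H₁ ⊆ H₂ := (hbdry H₁ H₂ h₁C h₂C).1 hsub
          exact h₁ne ⟨H₂, h₂C.1,
            by rw [closure_eq_self_union_frontier]; exact union_subset hsub' hsub⟩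
        · rw [Set.diff_nonempty]
          intro hsub
          have hsub' : H₂ ⊆ H₁ := (hbdry H₁ H₂ h₁C h₂C).2 hsub
          exact h₂ne ⟨H₁, h₁C.1,
            by rw [closure_eq_self_union_frontier]; exact union_subset hsub' hsub⟩
      · right; exact Set.not_nonempty_iff_eq_empty.1 hint
    · exact ⟨G₁, (SRAux.isBoundedGap_fill_iff hC₁.isClosed).2 ⟨hG₁, hnc₁⟩,
        by rwa [SRAux.unboundedGap_fill hC₂.isClosed]⟩
    · exact ⟨G₂, (SRAux.isBoundedGap_fill_iff hC₂.isClosed).2 ⟨hG₂, hnc₂⟩,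
        by rwa [SRAux.unboundedGap_fill hC₁.isClosed]⟩
    · intro e₁ e₂
      obtain ⟨e₁', h1⟩ := SRAux.thickness_fill hn hβ hC₁ hsub₁ ⟨G₁, hG₁, hnc₁⟩ e₁
      obtain ⟨e₂', h2⟩ := SRAux.thickness_fill hn hβ hC₂ hsub₂ ⟨G₂, hG₂, hnc₂⟩ e₂
      exact ⟨e₁', e₂', add_le_add h1 h2⟩
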